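/- Fix θπ < 0 and define f : (−∞, 0) → ℝ by f(θ) = ∫_ℝ N_{θπ}(x) · log(N_{θπ}(x)/N_θ(x)) dx (the Kullback–Leibler divergence KL(q_{θπ}, q_θ) for the family of centered one-dimensional Gaussians). Then f is differentiable at every θ < 0, and there is no L ≥ 0 such that the derivative of f is L-Lipschitz on (−∞, 0). (This witnesses that there exist a target and an exponential family for which the gradient of the divergence objective is not Lipschitz on its domain.) -/

import Mathlib

open MeasureTheory Real Filter Topology


lemma integrable_sq_mul_exp {b : ℝ} (hb : 0 < b) :
    Integrable fun x : ℝ => x ^ 2 * exp (-b * x ^ 2) := by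
  apply Integrable.mono' ((integrable_exp_neg_mul_sq (half_pos hb)).const_mul (2 / b))
  · exact (((continuous_pow 2).mul
      ((continuous_const.mul (continuous_pow 2)).rexp))).aestronglyMeasurable
  · filter_upwards with x
    rw [Real.norm_eq_abs, abs_of_nonneg (by positivity)]
    rw [← mul_le_mul_iff_left₀ (exp_pos (b * x ^ 2))]
    have e1 : exp (-b * x ^ 2) * exp (b * x ^ 2) = 1 := by rw [← exp_add]; simp
    have e2 : exp (-(b/2) * x ^ 2) * exp (b * x ^ 2) = exp ((b/2) * x ^ 2) := by
      rw [← exp_add]; ring_nf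
    rw [mul_assoc, e1, mul_one, mul_assoc, e2]
    calc x ^ 2 = (2 / b) * ((b/2) * x ^ 2) := by field_simp
      _ ≤ (2 / b) * exp ((b/2) * x ^ 2) :=
          mul_le_mul_of_nonneg_left
            (le_trans (by linarith) (Real.add_one_le_exp _)) (by positivity)

lemma integral_Ioi_sub {b : ℝ} (hb : 0 < b) :
    ∫ x in Set.Ioi (0:ℝ), (x ^ 2 * exp (-b * x ^ 2) - (1/(2*b)) * exp (-b * x ^ 2))
      = (0:ℝ) - (-((0:ℝ)/(2*b)) * exp (-b * (0:ℝ) ^ 2)) := by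
  apply integral_Ioi_of_hasDerivAt_of_tendsto (m := 0)
      (f := fun x => -(x/(2*b)) * exp (-b * x ^ 2))
      (f' := fun x => x ^ 2 * exp (-b * x ^ 2) - (1/(2*b)) * exp (-b * x ^ 2))
  · exact ((continuous_id.div_const (2*b)).neg.mul
      ((continuous_const.mul (continuous_pow 2)).rexp)).continuousWithinAt
  · intro x hx
    have h1 : HasDerivAt (fun x : ℝ => -(x/(2*b))) (-(1/(2*b))) x := by
      exact ((hasDerivAt_id' x).div_const (2*b)).neg
    have h2 : HasDerivAt (fun x : ℝ => exp (-b * x ^ 2)) (exp (-b * x ^ 2) * (-b * (2 * x))) x := by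
      have : HasDerivAt (fun x : ℝ => -b * x ^ 2) (-b * (2 * x)) x := by
        simpa using ((hasDerivAt_pow 2 x).const_mul (-b))
      exact this.exp
    refine (h1.mul h2).congr_deriv ?_
    field_simp
    ring
  · exact ((integrable_sq_mul_exp hb).sub
      ((integrable_exp_neg_mul_sq hb).const_mul _)).integrableOn
  · have h := tendsto_rpow_abs_mul_exp_neg_mul_sq_cocompact hb 1
    have h2 : Tendsto (fun x : ℝ => |x| ^ (1:ℝ) * exp (-b * x ^ 2)) atTop (𝓝 0) :=
      h.mono_left (by rw [cocompact_eq_atBot_atTop]; exact le_sup_right)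
    have h3 : Tendsto (fun x : ℝ => x * exp (-b * x ^ 2)) atTop (𝓝 0) := by
      apply h2.congr'
      filter_upwards [eventually_ge_atTop (0:ℝ)] with x hx
      rw [Real.rpow_one, abs_of_nonneg hx]
    have := h3.const_mul (-(1/(2*b)))
    simp only [mul_zero] at this
    apply this.congr
    intro x; ring

lemma integral_sq_mul_exp {b : ℝ} (hb : 0 < b) :
    ∫ x : ℝ, x ^ 2 * exp (-b * x ^ 2) = √(π / b) / (2 * b) := by
  have h0 := integral_Ioi_sub hb
  simp only [zero_div, neg_zero, zero_mul, sub_zero] at h0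
  have hint2 : IntegrableOn (fun x : ℝ => (1/(2*b)) * exp (-b * x ^ 2)) (Set.Ioi 0) :=
    ((integrable_exp_neg_mul_sq hb).const_mul _).integrableOn
  have hint1 : IntegrableOn (fun x : ℝ => x ^ 2 * exp (-b * x ^ 2)) (Set.Ioi 0) :=
    (integrable_sq_mul_exp hb).integrableOn
  rw [integral_sub hint1 hint2, sub_eq_zero] at h0
  have hI : ∫ x in Set.Ioi (0:ℝ), x ^ 2 * exp (-b * x ^ 2) = √(π / b) / (4 * b) := by
    rw [h0, integral_const_mul, integral_gaussian_Ioi]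
    ring
  have heven : ∫ x : ℝ, x ^ 2 * exp (-b * x ^ 2)
      = 2 * ∫ x in Set.Ioi (0:ℝ), x ^ 2 * exp (-b * x ^ 2) := by
    rw [← integral_comp_abs (f := fun x => x ^ 2 * exp (-b * x ^ 2))]
    congr 1
    ext x
    rw [sq_abs]
  rw [heven, hI]
  ring

/-- For the family of centered one-dimensional Gaussians with natural parameter `θ < 0`
and target `N_θπ`, the KL objective `f θ = ∫ N_θπ log (N_θπ / N_θ)` is differentiable at
every `θ < 0`, but its derivative is not Lipschitz on `(-∞, 0)`: there is no `L ≥ 0`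
such that the derivative of `f` is `L`-Lipschitz on `(-∞, 0)`. -/
theorem statement12
    (θπ : ℝ) (hθπ : θπ < 0)
    (A : ℝ → ℝ) (hA : ∀ θ, A θ = (1/2) * log π - (1/2) * log (-θ))
    (N : ℝ → ℝ → ℝ) (hN : ∀ θ x, N θ x = exp (θ * x ^ 2 - A θ))
    (f : ℝ → ℝ) (hf : ∀ θ, f θ = ∫ x : ℝ, N θπ x * log (N θπ x / N θ x)) :
    (∀ θ : ℝ, θ < 0 → DifferentiableAt ℝ f θ) ∧
    ¬ ∃ L : ℝ, 0 ≤ L ∧ ∀ θ θ' : ℝ, θ < 0 → θ' < 0 →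
        |deriv f θ - deriv f θ'| ≤ L * |θ - θ'| := by
  set b : ℝ := -θπ with hbdef
  have hb : 0 < b := by simp [hbdef]; linarith
  -- exp (A θπ) = √(π/b)
  have hsqrtpos : 0 < √(π / b) := Real.sqrt_pos.mpr (by positivity)
  have hexpA : exp (A θπ) = √(π / b) := by
    rw [hA, hbdef]
    rw [Real.exp_sub]
    have e1 : ∀ x : ℝ, 0 < x → exp ((1/2) * log x) = √x := by
      intro x hx
      rw [show (1/2) * log x = log x / 2 by ring, ← Real.log_sqrt hx.le,
        Real.exp_log (Real.sqrt_pos.mpr hx)]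
    rw [e1 π pi_pos, e1 (-θπ) (by linarith), ← Real.sqrt_div pi_pos.le]
  have hkey : exp (-(A θπ)) * √(π / b) = 1 := by
    rw [Real.exp_neg, hexpA, inv_mul_cancel₀ (ne_of_gt hsqrtpos)]
  -- explicit formula for f
  have hfeq : ∀ θ : ℝ, f θ = (θπ - θ) / (2*b) + (A θ - A θπ) := by
    intro θ
    rw [hf θ]
    have hcong : (fun x : ℝ => N θπ x * log (N θπ x / N θ x)) = fun x : ℝ =>
        ((θπ - θ) * exp (-(A θπ))) * (x ^ 2 * exp (-b * x ^ 2))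
          + ((A θ - A θπ) * exp (-(A θπ))) * exp (-b * x ^ 2) := by
      funext x
      rw [hN, hN, ← Real.exp_sub, Real.log_exp]
      rw [show θπ * x ^ 2 - A θπ = -b * x ^ 2 + -(A θπ) by rw [hbdef]; ring,
        Real.exp_add]
      ring
    rw [hcong]
    rw [integral_add ((integrable_sq_mul_exp hb).const_mul _)
      ((integrable_exp_neg_mul_sq hb).const_mul _)]
    rw [integral_const_mul, integral_const_mul, integral_sq_mul_exp hb, integral_gaussian]
    have : (θπ - θ) * exp (-(A θπ)) * (√(π / b) / (2*b))
          + (A θ - A θπ) * exp (-(A θπ)) * √(π / b)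
        = (θπ - θ) / (2*b) * (exp (-(A θπ)) * √(π / b))
          + (A θ - A θπ) * (exp (-(A θπ)) * √(π / b)) := by ring
    rw [this, hkey]
    ring
  -- derivative
  have hderiv : ∀ θ : ℝ, θ < 0 → HasDerivAt f (-(1/(2*b)) + -((1/2) * θ⁻¹)) θ := by
    intro θ hθ
    have hfun : f = fun t : ℝ =>
        (θπ - t)/(2*b) + ((1/2) * log π - (1/2) * log (-t) - A θπ) := by
      funext t
      rw [hfeq t, hA t]
    rw [hfun]
    have h1 : HasDerivAt (fun t : ℝ => log (-t)) θ⁻¹ θ := by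
      have := (Real.hasDerivAt_log (x := -θ) (by linarith)).comp θ (hasDerivAt_neg θ)
      refine this.congr_deriv ?_
      rw [inv_neg]; ring
    have h2 : HasDerivAt (fun t : ℝ => (θπ - t)/(2*b)) (-(1/(2*b))) θ := by
      have := ((hasDerivAt_id θ).const_sub θπ).div_const (2*b)
      refine this.congr_deriv ?_
      ring
    have h3 : HasDerivAt
        (fun t : ℝ => (1/2) * log π - (1/2) * log (-t) - A θπ)
        (-((1/2) * θ⁻¹)) θ := by
      exact ((h1.const_mul (1/2)).const_sub ((1/2) * log π)).sub_const (A θπ)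
    exact h2.add h3
  refine ⟨fun θ hθ => (hderiv θ hθ).differentiableAt, ?_⟩
  rintro ⟨L, hL, h⟩
  set ε : ℝ := 1/(2*(L+1)) with hεdef
  have hε : 0 < ε := by positivity
  have h1 := h (-ε) (-(2*ε)) (by linarith) (by linarith)
  rw [(hderiv (-ε) (by linarith)).deriv, (hderiv (-(2*ε)) (by linarith)).deriv] at h1
  have e2 : (-(1/(2*b)) + -((1/2) * (-ε)⁻¹)) - (-(1/(2*b)) + -((1/2) * (-(2*ε))⁻¹))
      = 1/(4*ε) := by
    field_simp
    ring
  rw [e2, show -ε - -(2*ε) = ε by ring, abs_of_pos (by positivity), abs_of_pos hε] at h1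
  rw [div_le_iff₀ (by positivity)] at h1
  have hsq : ε * (4*ε) * (L+1)^2 = 1 := by
    rw [hεdef]
    field_simp
    ring
  nlinarith [mul_pos hε hε, sq_nonneg L]
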